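/- In the OMA allocation, if P_th ≤ P₀ ≤ P* (the budget is below the unconstrained minimizer), then the minimum of the effective metric M over [0, P₀] is attained at P₀ if M(P₀) < 0, and at 0 otherwise. -/

import Mathlib

open Real Set

/-- OMA allocation, case `P_th ≤ P₀ ≤ P*`: the effective metric is minimized
over `[0, P₀]` at `P₀` if `M(P₀) < 0`, and at `0` otherwise. -/
theorem stmt12 (V K Φ B N Γ ρ P0 : ℝ) (hV : 0 < V) (hK : 0 < K) (hΦ : 0 < Φ)
    (hB : 0 < B) (hN : 1 ≤ N) (hΓ : 0 < Γ) (hρ : 0 < ρ)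
    (Pth : ℝ) (hPth : Pth = ((2 : ℝ) ^ (N * ρ / (Φ * B)) - 1) / (N * Γ))
    (Pstar : ℝ) (hPstar : Pstar = Φ * B * K / (N * V * Real.log 2) - 1 / (N * Γ))
    (hcase1 : Pth ≤ P0) (hcase2 : P0 ≤ Pstar)
    (M : ℝ → ℝ)
    (hM : ∀ P, M P = V * P - K * (Φ * B / N) * Real.logb 2 (1 + N * Γ * P) *
        (if Pth ≤ P then 1 else 0)) :
    (M P0 < 0 → IsMinOn M (Set.Icc 0 P0) P0) ∧
      (0 ≤ M P0 → IsMinOn M (Set.Icc 0 P0) 0) := by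
  have hN0 : (0:ℝ) < N := lt_of_lt_of_le one_pos hN
  have ha0 : 0 < N * Γ := mul_pos hN0 hΓ
  have hlog2 : (0:ℝ) < Real.log 2 := Real.log_pos one_lt_two
  have hc0 : 0 < K * (Φ * B / N) := by positivity
  set g : ℝ → ℝ := fun P => V * P - K * (Φ * B / N) * Real.log (1 + N * Γ * P) / Real.log 2 with hg
  have hMg : ∀ P, Pth ≤ P → M P = g P := by
    intro P hP
    rw [hM P, if_pos hP, Real.logb, hg]
    ring
  have hMlt : ∀ P, ¬ Pth ≤ P → M P = V * P := by
    intro P hP; rw [hM P, if_neg hP]; ring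
  have hPth0 : 0 < Pth := by
    rw [hPth]
    apply div_pos _ ha0
    have h2 : (1:ℝ) < (2 : ℝ) ^ (N * ρ / (Φ * B)) :=
      Real.one_lt_rpow_iff_of_pos two_pos |>.mpr (Or.inl ⟨one_lt_two, by positivity⟩)
    linarith
  have hderiv : ∀ x ∈ Set.Icc (0:ℝ) Pstar,
      HasDerivAt g (V - K * (Φ * B / N) * ((N * Γ) / (1 + N * Γ * x)) / Real.log 2) x := by
    intro x hx
    have hpos : 0 < 1 + N * Γ * x := by nlinarith [hx.1]
    have h1 : HasDerivAt (fun P : ℝ => 1 + N * Γ * P) (N * Γ) x := by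
      simpa using (hasDerivAt_id x).const_mul (N * Γ) |>.const_add 1
    have h2 : HasDerivAt (fun P : ℝ => Real.log (1 + N * Γ * P)) ((N * Γ) / (1 + N * Γ * x)) x := by
      have := (Real.hasDerivAt_log hpos.ne').comp x h1
      simpa [div_eq_inv_mul, Function.comp_def] using this
    have h3 : HasDerivAt (fun P : ℝ => V * P) V x := by
      simpa using (hasDerivAt_id x).const_mul V
    exact h3.sub (((h2.const_mul (K * (Φ * B / N))).div_const (Real.log 2)))
  have hanti : AntitoneOn g (Set.Icc 0 Pstar) := by
    apply antitoneOn_of_deriv_nonpos (convex_Icc 0 Pstar)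
    · exact fun x hx => (hderiv x hx).continuousAt.continuousWithinAt
    · intro x hx
      rw [interior_Icc] at hx
      exact (hderiv x (Ioo_subset_Icc_self hx)).differentiableAt.differentiableWithinAt
    · intro x hx
      rw [interior_Icc] at hx
      rw [(hderiv x (Ioo_subset_Icc_self hx)).deriv]
      have hpos : 0 < 1 + N * Γ * x := by nlinarith [hx.1.le]
      have hxle : x ≤ Pstar := hx.2.le
      have key : V * Real.log 2 * (1 + N * Γ * x) ≤ K * (Φ * B / N) * (N * Γ) := by
        have E : Pstar * (N * Γ) * (V * Real.log 2) = K * (Φ * B / N) * (N * Γ) - V * Real.log 2 := by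
          rw [hPstar]; field_simp
        nlinarith [mul_le_mul_of_nonneg_left hxle (le_of_lt (mul_pos ha0 (mul_pos hV hlog2)))]
      have heq : K * (Φ * B / N) * ((N * Γ) / (1 + N * Γ * x)) / Real.log 2
          = K * (Φ * B / N) * (N * Γ) / ((1 + N * Γ * x) * Real.log 2) := by
        rw [mul_div_assoc', div_div]
      rw [sub_nonpos, heq, le_div_iff₀ (by positivity)]
      nlinarith [key]
  have hP00 : (0:ℝ) ≤ P0 := le_trans hPth0.le hcase1
  have hgle : ∀ x, Pth ≤ x → x ≤ P0 → g P0 ≤ g x := by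
    intro x hx1 hx2
    exact hanti ⟨le_trans hPth0.le hx1, le_trans hx2 hcase2⟩ ⟨hP00, hcase2⟩ hx2
  constructor
  · intro hneg
    rw [isMinOn_iff]
    intro x hx
    by_cases hxth : Pth ≤ x
    · rw [hMg x hxth, hMg P0 hcase1]
      exact hgle x hxth hx.2
    · rw [hMlt x hxth]
      have : 0 ≤ V * x := mul_nonneg hV.le hx.1
      linarith
  · intro hpos
    rw [isMinOn_iff]
    intro x hx
    have hM0 : M 0 = 0 := by
      rw [hMlt 0 (by linarith), mul_zero]
    rw [hM0]
    by_cases hxth : Pth ≤ x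
    · have h1 := hgle x hxth hx.2
      rw [hMg x hxth]
      rw [hMg P0 hcase1] at hpos
      linarith
    · rw [hMlt x hxth]
      exact mul_nonneg hV.le hx.1
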